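/- Let f be a weighting method on n×n pairwise comparison matrices that is invariant to row multiplication, let A be an n×n pairwise comparison matrix, and let i, j be distinct alternatives with f_i(A) ≥ f_j(A). Choose α > max{ f_m(A) : 1 ≤ m ≤ n } / f_i(A), and let Â be obtained from A by applying the transformation of row multiplication by α on i and then on j. Then f_i(Â)/f_j(Â) = f_i(A)/f_j(A) ≥ 1 and f_i(Â) ≥ f_m(Â) for all m = 1,…,n, i.e. alternative i attains the (weakly) largest weight in Â. -/

import Mathlib

/-- A pairwise comparison matrix: all entries positive and `A j i = 1 / A i j`. -/
def IsPCM {n : ℕ} (A : Matrix (Fin n) (Fin n) ℝ) : Prop :=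
  (∀ i j, 0 < A i j) ∧ ∀ i j, A j i = 1 / A i j

/-- Transformation of row multiplication on alternative `i` by factor `α`. -/
noncomputable def rowMul {n : ℕ} (A : Matrix (Fin n) (Fin n) ℝ) (i : Fin n) (α : ℝ) :
    Matrix (Fin n) (Fin n) ℝ :=
  Matrix.of fun k l =>
    if k = i ∧ l ≠ i then α * A k l
    else if l = i ∧ k ≠ i then A k l / α
    else A k l

/-- Let `f` be a weighting method invariant to row multiplication, `A` a pairwise
comparison matrix and `i ≠ j` alternatives with `f A i ≥ f A j`. If
`α > max_m f A m / f A i` and `Â` is obtained from `A` by row multiplication by `α`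
on `i` and then on `j`, then `f Â i / f Â j = f A i / f A j ≥ 1` and alternative `i`
attains the weakly largest weight in `Â`. -/
lemma rowMul_isPCM {n : ℕ} {A : Matrix (Fin n) (Fin n) ℝ} (hA : IsPCM A)
    (i : Fin n) {α : ℝ} (hα : 0 < α) : IsPCM (rowMul A i α) := by
  obtain ⟨hp, hr⟩ := hA
  constructor
  · intro k l
    have := hp k l
    simp only [rowMul, Matrix.of_apply]
    split_ifs <;> positivity
  · intro k l
    simp only [rowMul, Matrix.of_apply]
    rcases eq_or_ne k i with hk | hk <;> rcases eq_or_ne l i with hl | hl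
    · simp only [hk, hl, ne_eq, not_true_eq_false, and_false, if_false]
      exact hr i i
    · simp only [hk, hl, ne_eq, not_true_eq_false, not_false_eq_true, and_true, and_false,
        if_true, if_false, true_and, false_and]
      rw [hr i l]
      have := (hp i l).ne'
      field_simp
    · simp only [hk, hl, ne_eq, not_true_eq_false, not_false_eq_true, and_true, and_false,
        if_true, if_false, true_and, false_and]
      rw [hr k i]
      have := (hp k i).ne'
      field_simp
    · simp only [hk, hl, ne_eq, and_false, false_and, if_false]
      exact hr k l

theorem rowMul_makes_top {n : ℕ}
    (f : Matrix (Fin n) (Fin n) ℝ → Fin n → ℝ)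
    (hPos : ∀ A, IsPCM A → ∀ i, 0 < f A i)
    (hSum : ∀ A, IsPCM A → ∑ i, f A i = 1)
    (hIRM : ∀ A, IsPCM A → ∀ i : Fin n, ∀ α : ℝ, 0 < α → ∀ j, j ≠ i →
      f (rowMul A i α) i / f (rowMul A i α) j = α * (f A i / f A j))
    (A : Matrix (Fin n) (Fin n) ℝ) (hA : IsPCM A)
    (i j : Fin n) (hij : i ≠ j) (hw : f A j ≤ f A i)
    (α : ℝ)
    (hα : (Finset.univ.sup' ⟨i, Finset.mem_univ i⟩ fun m => f A m) / f A i < α) :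
    f (rowMul (rowMul A i α) j α) i / f (rowMul (rowMul A i α) j α) j =
        f A i / f A j ∧
      1 ≤ f A i / f A j ∧
      ∀ m, f (rowMul (rowMul A i α) j α) m ≤ f (rowMul (rowMul A i α) j α) i := by
  have hfi := hPos A hA i
  have hfj := hPos A hA j
  have hsup : f A i ≤ Finset.univ.sup' ⟨i, Finset.mem_univ i⟩ fun m => f A m :=
    Finset.le_sup' _ (Finset.mem_univ i)
  have h1α : (1:ℝ) < α := lt_of_le_of_lt ((one_le_div hfi).2 hsup) hα
  have hαpos : (0:ℝ) < α := by linarith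
  have hB : IsPCM (rowMul A i α) := rowMul_isPCM hA i hαpos
  have hC : IsPCM (rowMul (rowMul A i α) j α) := rowMul_isPCM hB j hαpos
  set B := rowMul A i α with hBdef
  set C := rowMul B j α with hCdef
  have hBi := hPos B hB i
  have hBj := hPos B hB j
  have hCi := hPos C hC i
  have hCj := hPos C hC j
  -- key ratio identities
  have e1j : f B i / f B j = α * (f A i / f A j) := hIRM A hA i α hαpos j (Ne.symm hij)
  have e2i : f C j / f C i = α * (f B j / f B i) := hIRM B hB j α hαpos i hij
  -- part 1
  have part1 : f C i / f C j = f A i / f A j := by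
    field_simp at e1j e2i ⊢
    nlinarith [mul_pos hBi hBj, mul_pos hfi hfj, mul_pos hCi hCj]
  refine ⟨part1, (one_le_div hfj).2 hw, ?_⟩
  intro m
  rcases eq_or_ne m i with rfl | hmi
  · exact le_refl _
  rcases eq_or_ne m j with hmj | hmj
  · rw [hmj]
    have h1 : 1 ≤ f C i / f C j := by rw [part1]; exact (one_le_div hfj).2 hw
    exact (one_le_div hCj).mp h1
  · have hfm := hPos A hA m
    have hBm := hPos B hB m
    have hCm := hPos C hC m
    have e1m : f B i / f B m = α * (f A i / f A m) := hIRM A hA i α hαpos m hmi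
    have e3m : f C j / f C m = α * (f B j / f B m) := hIRM B hB j α hαpos m hmj
    have hmult : α * f B j * (f C i * f A m) = α * f B j * (α * f A i * f C m) := by
      field_simp at e2i e1m e3m
      linear_combination (-(f A m)) * e2i + f C j * e1m + α * f A i * e3m
    have key : f C i * f A m = α * f A i * f C m :=
      mul_left_cancel₀ (by positivity) hmult
    have hsupm : f A m ≤ Finset.univ.sup' ⟨i, Finset.mem_univ i⟩ fun m => f A m :=
      Finset.le_sup' _ (Finset.mem_univ m)
    have hαm : f A m ≤ α * f A i := by
      have := (div_lt_iff₀ hfi).mp hα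
      linarith
    have h2 : α * f A i * f C m ≤ α * f A i * f C i := by
      nlinarith [mul_le_mul_of_nonneg_left hαm hCi.le]
    exact le_of_mul_le_mul_left h2 (by positivity)
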